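/- Let A be an n×n real matrix, j an observation index, and i a coordinate index. The i-th coordinate x_i of an initial state x ∈ ℝⁿ is uniquely determined by the infinite observation sequence s_k = (A^k x)_j (k ≥ 0) if and only if every vector v in the kernel of M_{n,j} satisfies v_i = 0. -/

import Mathlib

/-- The observability matrix `M_{t,j}`: its `k`-th row is the `j`-th row of `A^k`. -/
def obsM {n : ℕ} (A : Matrix (Fin n) (Fin n) ℝ) (t : ℕ) (j : Fin n) :
    Matrix (Fin t) (Fin n) ℝ :=
  Matrix.of fun k i => (A ^ (k : ℕ)) j i

lemma obsM_kernel_all {n : ℕ} (A : Matrix (Fin n) (Fin n) ℝ) (j : Fin n)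
    (v : Fin n → ℝ) (hv : (obsM A n j).mulVec v = 0) :
    ∀ k : ℕ, ((A ^ k).mulVec v) j = 0 := by
  have hlow : ∀ k : ℕ, k < n → ((A ^ k).mulVec v) j = 0 := by
    intro k hk
    have := congrFun hv ⟨k, hk⟩
    simpa [obsM, Matrix.mulVec, dotProduct] using this
  -- Cayley-Hamilton
  have hCH := Matrix.aeval_self_charpoly A
  have hdeg : A.charpoly.natDegree = n := by simpa using A.charpoly_natDegree_eq_dim
  have hmono : A.charpoly.Monic := A.charpoly_monic
  rw [Polynomial.aeval_eq_sum_range, hdeg, Finset.sum_range_succ,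
    show A.charpoly.coeff n = 1 by simpa [hdeg] using hmono.coeff_natDegree,
    one_smul] at hCH
  have hAn : A ^ n = -∑ k ∈ Finset.range n, A.charpoly.coeff k • A ^ k :=
    eq_neg_of_add_eq_zero_left (by rw [add_comm]; exact hCH)
  have hsum : ∀ (s : Finset ℕ) (f : ℕ → Matrix (Fin n) (Fin n) ℝ) (w : Fin n → ℝ),
      (∑ m ∈ s, f m).mulVec w = ∑ m ∈ s, (f m).mulVec w := by
    intro s f w
    induction s using Finset.induction_on with
    | empty => simp [Matrix.zero_mulVec]
    | @insert a s h ih => simp [Finset.sum_insert h, Matrix.add_mulVec, ih]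
  intro k
  induction k using Nat.strong_induction_on with
  | _ k ih =>
    rcases lt_or_ge k n with hk | hk
    · exact hlow k hk
    · obtain ⟨t, rfl⟩ := Nat.exists_eq_add_of_le hk
      have : A ^ (n + t) = -∑ m ∈ Finset.range n, A.charpoly.coeff m • A ^ (m + t) := by
        rw [pow_add, hAn, neg_mul, Finset.sum_mul, neg_inj]
        refine Finset.sum_congr rfl fun m _ => ?_
        rw [smul_mul_assoc, pow_add]
      rw [this, Matrix.neg_mulVec]
      simp only [Pi.neg_apply, neg_eq_zero]
      rw [hsum]
      simp only [Matrix.smul_mulVec, Finset.sum_apply]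
      refine Finset.sum_eq_zero fun m hm => ?_
      have hmt : m + t < n + t := by
        have := Finset.mem_range.mp hm; omega
      simp [ih _ hmt]

/-- Coordinate `i` of the initial state is uniquely determined by the infinite observation
sequence `s_k = (A^k x)_j` iff every kernel vector of `M_{n,j}` vanishes at coordinate `i`. -/
theorem unique_coord_iff_regular_node {n : ℕ} (A : Matrix (Fin n) (Fin n) ℝ)
    (j i : Fin n) :
    (∀ x y : Fin n → ℝ,
        (∀ k : ℕ, ((A ^ k).mulVec x) j = ((A ^ k).mulVec y) j) → x i = y i) ↔
      (∀ v : Fin n → ℝ, (obsM A n j).mulVec v = 0 → v i = 0) := by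
  constructor
  · intro h v hv
    have := h v 0 (fun k => by
      simpa [Matrix.mulVec_zero] using obsM_kernel_all A j v hv k)
    simpa using this
  · intro h x y hxy
    have hker : (obsM A n j).mulVec (x - y) = 0 := by
      funext k
      simp only [Matrix.mulVec_sub, Pi.sub_apply, Pi.zero_apply, sub_eq_zero]
      have := hxy (k : ℕ)
      simpa [obsM, Matrix.mulVec, dotProduct] using this
    have := h (x - y) hker
    have : x i - y i = 0 := by simpa using this
    linarith
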